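/- arXiv:1702.00168 — 3 statements merged into one kernel-verified Lean document; each statement's English description precedes it below -/
import Mathlib

section
/- (Polytopes of ℜ₂.) Let ℜ₀ be a finite family of polytopes in ℝ^N satisfying (H1) and (H2) with 1 < r_min < R, let d₀ ∈ S, and let {x′_i}_{i=1}^R be a d₀-compatible enumeration of E such that Ω_{ℜ₁,1}(d₀) := Ω_{ℜ₀}(d₀) = conv(E \ {x′_1,…,x′_k}) for some 0 ≤ k < r_min. Then, with ℓ = max{i : ⟨x′_i,d₀⟩ = ⟨x′_{r_min},d₀⟩} (so ℓ ∈ {r_min,…,R}), one has Ω_{ℜ₁}(−d₀) = conv({x′_1,…,x′_ℓ}), where ℜ₁ = F(ℜ₀). In particular every polytope of ℜ₂ = F(ℜ₁) contains at least r_min points of E. -/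
open scoped RealInnerProductSpace
open Set

noncomputable section

/-- The ambient Euclidean space `ℝ^N`. -/
abbrev Euc (N : ℕ) : Type := EuclideanSpace ℝ (Fin N)

/-- A polytope: a nonempty convex compact subset of `ℝ^N` with finitely many extreme points. -/
def IsPolytope {N : ℕ} (Ω : Set (Euc N)) : Prop :=
  Ω.Nonempty ∧ Convex ℝ Ω ∧ IsCompact Ω ∧ (Set.extremePoints ℝ Ω).Finite

/-- The unit sphere `S` of `ℝ^N`. -/
def sph (N : ℕ) : Set (Euc N) := Metric.sphere (0 : Euc N) 1

/-- `E(Ω,d)`: the set of `d`-active extreme points of `Ω`. -/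
def activeExt {N : ℕ} (Ω : Set (Euc N)) (d : Euc N) : Set (Euc N) :=
  {x ∈ Set.extremePoints ℝ Ω | ∀ y ∈ Ω, ⟪y, d⟫ ≤ ⟪x, d⟫}

/-- `Ω_ℜ(d) = conv (⋃_{Ω ∈ ℜ} E(Ω,d))`, the dual polytope of the family `ℜ` in direction `d`. -/
def dualPoly {N : ℕ} (ℛ : Set (Set (Euc N))) (d : Euc N) : Set (Euc N) :=
  convexHull ℝ (⋃ Ω ∈ ℛ, activeExt Ω d)

/-- The dual family `F(ℜ) = {Ω_ℜ(d) : d ∈ S}`. -/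
def dualFam {N : ℕ} (ℛ : Set (Set (Euc N))) : Set (Set (Euc N)) :=
  dualPoly ℛ '' sph N

/-- `E_ℜ`, the set of extreme points of all polytopes of the family `ℜ`. -/
def extFam {N : ℕ} (ℛ : Set (Set (Euc N))) : Set (Euc N) :=
  ⋃ Ω ∈ ℛ, Set.extremePoints ℝ Ω

/-- A `d`-compatible enumeration of a finite set `E` of cardinality `R`:
an enumeration `x 0, x 1, …, x (R-1)` of `E` with `⟪x 0, d⟫ ≤ ⟪x 1, d⟫ ≤ ⋯ ≤ ⟪x (R-1), d⟫`. -/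
def IsCompatEnum {N : ℕ} (E : Set (Euc N)) (R : ℕ) (d : Euc N) (x : ℕ → Euc N) : Prop :=
  Set.InjOn x (Set.Iio R) ∧ x '' (Set.Iio R) = E ∧
    ∀ i j : ℕ, i ≤ j → j < R → ⟪x i, d⟫ ≤ ⟪x j, d⟫

namespace DSDaux

variable {N : ℕ}

lemma mem_extremePoints_hull {S : Set (Euc N)} {x : Euc N} (hxS : x ∈ S)
    (hnot : x ∉ convexHull ℝ (S \ {x})) : x ∈ Set.extremePoints ℝ (convexHull ℝ S) := by
  rw [mem_extremePoints_iff_forall_segment]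
  refine ⟨subset_convexHull ℝ S hxS, ?_⟩
  intro x₁ h₁ x₂ h₂ hseg
  by_contra hcon
  push_neg at hcon
  obtain ⟨hne₁, hne₂⟩ := hcon
  rcases Set.eq_empty_or_nonempty (S \ {x}) with hS | hS
  · have hsub : S ⊆ {x} := by
      intro y hy
      by_contra h
      exact (Set.eq_empty_iff_forall_notMem.1 hS y) ⟨hy, h⟩
    have : convexHull ℝ S ⊆ {x} := by
      have := convexHull_mono hsub (𝕜 := ℝ)
      rwa [convexHull_singleton] at this
    exact hne₁ (this h₁)
  · have hins : insert x (S \ {x}) = S := by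
      rw [Set.insert_diff_singleton, Set.insert_eq_self.2 hxS]
    have hjoin : convexHull ℝ S = convexJoin ℝ {x} (convexHull ℝ (S \ {x})) := by
      conv_lhs => rw [← hins]
      rw [convexHull_insert hS]
    rw [hjoin, mem_convexJoin] at h₁ h₂
    obtain ⟨a₁, ha₁, z₁, hz₁, hx₁seg⟩ := h₁
    obtain ⟨a₂, ha₂, z₂, hz₂, hx₂seg⟩ := h₂
    rw [Set.mem_singleton_iff] at ha₁ ha₂
    rw [ha₁] at hx₁seg; rw [ha₂] at hx₂seg
    obtain ⟨p₁, q₁, hp₁, hq₁, hpq₁, hx₁⟩ := hx₁seg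
    obtain ⟨p₂, q₂, hp₂, hq₂, hpq₂, hx₂⟩ := hx₂seg
    obtain ⟨u, v, hu, hv, huv, hx⟩ := hseg
    set μ : ℝ := u * q₁ + v * q₂ with hμ
    have key : μ • x = (u * q₁) • z₁ + (v * q₂) • z₂ := by
      have e1 : (u * p₁ + v * p₂) • x + ((u * q₁) • z₁ + (v * q₂) • z₂) = x := by
        have e0 : (u * p₁ + v * p₂) • x + ((u * q₁) • z₁ + (v * q₂) • z₂) = u • x₁ + v • x₂ := by
          rw [← hx₁, ← hx₂]; module
        rw [e0, hx]
      have hcoef : u * p₁ + v * p₂ = 1 - μ := by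
        rw [hμ]; linear_combination u * hpq₁ + v * hpq₂ + huv
      rw [hcoef] at e1
      have h2 : ((u:ℝ) * q₁) • z₁ + (v * q₂) • z₂ = x - (1 - μ) • x :=
        eq_sub_of_add_eq' e1
      rw [h2, sub_smul, one_smul]
      abel
    rcases eq_or_lt_of_le (show (0:ℝ) ≤ μ from by positivity) with hμ0 | hμ0
    · -- μ = 0
      have hsum : u * q₁ + v * q₂ = 0 := by rw [← hμ, ← hμ0]
      have h1 : u * q₁ = 0 ∧ v * q₂ = 0 := by
        constructor <;> linarith [mul_nonneg hu hq₁, mul_nonneg hv hq₂]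
      rcases eq_or_lt_of_le hu with hu0 | hu0
      · have hv1 : v = 1 := by linarith
        have : x₂ = x := by
          rw [← hx, ← hu0, hv1]; simp
        exact hne₂ this
      · have hq₁0 : q₁ = 0 := by
          rcases mul_eq_zero.mp h1.1 with h | h
          · exact absurd h hu0.ne'
          · exact h
        have hp₁1 : p₁ = 1 := by linarith
        have : x₁ = x := by rw [← hx₁, hq₁0, hp₁1]; simp
        exact hne₁ this
    · -- μ > 0
      have hw : μ⁻¹ • ((u * q₁) • z₁ + (v * q₂) • z₂) ∈ convexHull ℝ (S \ {x}) := by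
        have hconv := convex_convexHull ℝ (S \ {x})
        have : μ⁻¹ • ((u * q₁) • z₁ + (v * q₂) • z₂)
            = (μ⁻¹ * (u * q₁)) • z₁ + (μ⁻¹ * (v * q₂)) • z₂ := by
          rw [smul_add, smul_smul, smul_smul]
        rw [this]
        refine hconv hz₁ hz₂ (by positivity) (by positivity) ?_
        field_simp
        exact hμ.symm
      have hxw : x = μ⁻¹ • ((u * q₁) • z₁ + (v * q₂) • z₂) := by
        rw [← key, smul_smul, inv_mul_cancel₀ (ne_of_gt hμ0), one_smul]
      exact hnot (hxw ▸ hw)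


lemma extremePoints_hull_eq {E S : Set (Euc N)}
    (H1 : ∀ x ∈ E, x ∉ convexHull ℝ (E \ {x})) (hS : S ⊆ E) :
    Set.extremePoints ℝ (convexHull ℝ S) = S := by
  refine subset_antisymm extremePoints_convexHull_subset (fun x hx => ?_)
  exact mem_extremePoints_hull hx (fun h => H1 x (hS hx)
    (convexHull_mono (Set.diff_subset_diff_left hS) h))

lemma convex_inner_le (f : Euc N) (c : ℝ) : Convex ℝ {w : Euc N | ⟪w, f⟫ ≤ c} := by
  refine convex_halfSpace_le ⟨fun a b => ?_, fun r a => ?_⟩ c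
  · exact inner_add_left a b f
  · exact real_inner_smul_left a f r

lemma activeExt_hull {E S : Set (Euc N)}
    (H1 : ∀ x ∈ E, x ∉ convexHull ℝ (E \ {x})) (hS : S ⊆ E) (f : Euc N) :
    activeExt (convexHull ℝ S) f = {x ∈ S | ∀ z ∈ S, ⟪z, f⟫ ≤ ⟪x, f⟫} := by
  ext x
  simp only [activeExt, Set.mem_setOf_eq, extremePoints_hull_eq H1 hS]
  constructor
  · rintro ⟨hx, hmax⟩
    exact ⟨hx, fun z hz => hmax z (subset_convexHull ℝ S hz)⟩
  · rintro ⟨hx, hmax⟩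
    refine ⟨hx, fun y hy => ?_⟩
    have : convexHull ℝ S ⊆ {w : Euc N | ⟪w, f⟫ ≤ ⟪x, f⟫} :=
      convexHull_min (fun z hz => hmax z hz) (convex_inner_le f _)
    exact this hy

/-- `G(d)`: points of `E` having at least `rmin` points of `E` weakly `d`-below them. -/
def Gs (E : Set (Euc N)) (rmin : ℕ) (d : Euc N) : Set (Euc N) :=
  {x ∈ E | rmin ≤ {y ∈ E | ⟪y, d⟫ ≤ ⟪x, d⟫}.ncard}

lemma Gs_subset (E : Set (Euc N)) (rmin : ℕ) (d : Euc N) : Gs E rmin d ⊆ E :=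
  Set.sep_subset _ _

lemma Gs_smul (E : Set (Euc N)) (rmin : ℕ) {c : ℝ} (hc : 0 < c) (d : Euc N) :
    Gs E rmin (c • d) = Gs E rmin d := by
  unfold Gs
  have h : ∀ x y : Euc N, (⟪y, c • d⟫ ≤ ⟪x, c • d⟫ ↔ ⟪y, d⟫ ≤ ⟪x, d⟫) := by
    intro x y
    rw [real_inner_smul_right, real_inner_smul_right]
    exact mul_le_mul_iff_right₀ hc
  have h2 : ∀ x : Euc N, {y ∈ E | ⟪y, c • d⟫ ≤ ⟪x, c • d⟫} = {y ∈ E | ⟪y, d⟫ ≤ ⟪x, d⟫} := by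
    intro x; ext y
    simp only [Set.mem_setOf_eq]
    exact and_congr_right fun _ => h x y
  ext x; simp only [Set.mem_setOf_eq, h2]

lemma order_stat {α : Type*} [DecidableEq α] (F : Finset α) (v : α → ℝ) (m : ℕ)
    (hm : 1 ≤ m) (hcard : m ≤ F.card) :
    ∃ z₀ ∈ F, m ≤ (F.filter (fun z => v z ≤ v z₀)).card ∧
      (F.filter (fun z => v z < v z₀)).card ≤ m - 1 := by
  classical
  set T := F.filter (fun z => m ≤ (F.filter (fun w => v w ≤ v z)).card) with hT
  have hTne : T.Nonempty := by
    have hFne : F.Nonempty := Finset.card_pos.mp (lt_of_lt_of_le hm hcard)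
    obtain ⟨b, hb, hmax⟩ := F.exists_max_image v hFne
    refine ⟨b, Finset.mem_filter.2 ⟨hb, ?_⟩⟩
    have : F.filter (fun w => v w ≤ v b) = F := Finset.filter_true_of_mem (fun w hw => hmax w hw)
    rw [this]; exact hcard
  obtain ⟨z₀, hz₀T, hmin⟩ := T.exists_min_image v hTne
  have hz₀F : z₀ ∈ F := (Finset.mem_filter.1 hz₀T).1
  refine ⟨z₀, hz₀F, (Finset.mem_filter.1 hz₀T).2, ?_⟩
  by_contra h
  push_neg at h
  have hm' : m ≤ (F.filter (fun z => v z < v z₀)).card := by omega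
  set W := F.filter (fun z => v z < v z₀) with hW
  have hWne : W.Nonempty := Finset.card_pos.mp (lt_of_lt_of_le hm hm')
  obtain ⟨w, hwW, hwmax⟩ := W.exists_max_image v hWne
  have hwF : w ∈ F := (Finset.mem_filter.1 hwW).1
  have hwv : v w < v z₀ := (Finset.mem_filter.1 hwW).2
  have hsub : W ⊆ F.filter (fun z => v z ≤ v w) := by
    intro z hz
    exact Finset.mem_filter.2 ⟨(Finset.mem_filter.1 hz).1, hwmax z hz⟩
  have hwT : w ∈ T :=
    Finset.mem_filter.2 ⟨hwF, le_trans hm' (Finset.card_le_card hsub)⟩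
  exact absurd (hmin w hwT) (not_le.2 hwv)


section main

variable {ℛ₀ : Set (Set (Euc N))} {E : Set (Euc N)} {rmin : ℕ}

lemma union_active (hE : E = extFam ℛ₀) (hEfin : E.Finite)
    (hlb : ∀ Ω ∈ ℛ₀, rmin ≤ (Ω ∩ E).ncard) (hr1 : 1 ≤ rmin)
    (H1 : ∀ x ∈ E, x ∉ convexHull ℝ (E \ {x}))
    (H2 : ∀ A ⊆ E, A.ncard = rmin → convexHull ℝ A ∈ ℛ₀) (d : Euc N) :
    (⋃ Ω ∈ ℛ₀, activeExt Ω d) = Gs E rmin d := by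
  ext x
  simp only [Set.mem_iUnion, exists_prop]
  constructor
  · rintro ⟨Ω, hΩ, hxe, hxmax⟩
    have hxE : x ∈ E := by rw [hE]; exact Set.mem_biUnion hΩ hxe
    refine ⟨hxE, le_trans (hlb Ω hΩ)
      (Set.ncard_le_ncard ?_ (hEfin.subset (Set.sep_subset _ _)))⟩
    rintro y ⟨hyΩ, hyE⟩
    exact ⟨hyE, hxmax y hyΩ⟩
  · rintro ⟨hxE, hcount⟩
    set L := {y ∈ E | ⟪y, d⟫ ≤ ⟪x, d⟫} with hL
    have hLfin : L.Finite := hEfin.subset (Set.sep_subset _ _)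
    have hxL : x ∈ L := ⟨hxE, le_refl _⟩
    have hcard : rmin - 1 ≤ (L \ {x}).ncard := by
      rw [Set.ncard_diff_singleton_of_mem hxL]
      omega
    obtain ⟨t, hts, htc⟩ := Set.exists_subset_card_eq hcard
    have hxt : x ∉ t := fun h => (hts h).2 rfl
    have htfin : t.Finite := hLfin.subset (hts.trans Set.diff_subset)
    have hAcard : (insert x t).ncard = rmin := by
      rw [Set.ncard_insert_of_notMem hxt htfin, htc]
      omega
    have hAL : insert x t ⊆ L := Set.insert_subset hxL (hts.trans Set.diff_subset)
    have hAE : insert x t ⊆ E := hAL.trans (Set.sep_subset _ _)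
    refine ⟨convexHull ℝ (insert x t), H2 _ hAE hAcard, ?_⟩
    rw [activeExt_hull H1 hAE d]
    exact ⟨Set.mem_insert x t, fun z hz => (hAL hz).2⟩

lemma dualPoly_eq (hE : E = extFam ℛ₀) (hEfin : E.Finite)
    (hlb : ∀ Ω ∈ ℛ₀, rmin ≤ (Ω ∩ E).ncard) (hr1 : 1 ≤ rmin)
    (H1 : ∀ x ∈ E, x ∉ convexHull ℝ (E \ {x}))
    (H2 : ∀ A ⊆ E, A.ncard = rmin → convexHull ℝ A ∈ ℛ₀) (d : Euc N) :
    dualPoly ℛ₀ d = convexHull ℝ (Gs E rmin d) := by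
  rw [dualPoly, union_active hE hEfin hlb hr1 H1 H2 d]

lemma compl_Gs (hEfin : E.Finite) (hr1 : 1 ≤ rmin) (d : Euc N) :
    (E \ Gs E rmin d).ncard < rmin := by
  by_contra h
  push_neg at h
  have hfin : (E \ Gs E rmin d).Finite := hEfin.subset Set.diff_subset
  have hne : (E \ Gs E rmin d).Nonempty := Set.nonempty_of_ncard_ne_zero (by omega)
  obtain ⟨b, hb, hmax⟩ := Set.exists_max_image _ (fun y : Euc N => ⟪y, d⟫) hfin hne
  have hsub : E \ Gs E rmin d ⊆ {y ∈ E | ⟪y, d⟫ ≤ ⟪b, d⟫} := fun z hz => ⟨hz.1, hmax z hz⟩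
  have hle : rmin ≤ {y ∈ E | ⟪y, d⟫ ≤ ⟪b, d⟫}.ncard :=
    le_trans h (Set.ncard_le_ncard hsub (hEfin.subset (Set.sep_subset _ _)))
  exact hb.2 ⟨hb.1, hle⟩

lemma exists_dir (hE : E = extFam ℛ₀) (hEfin : E.Finite)
    (hlb : ∀ Ω ∈ ℛ₀, rmin ≤ (Ω ∩ E).ncard)
    (hr2 : 2 ≤ rmin) (hrR : rmin < E.ncard)
    (H1 : ∀ x ∈ E, x ∉ convexHull ℝ (E \ {x}))
    (H2 : ∀ A ⊆ E, A.ncard = rmin → convexHull ℝ A ∈ ℛ₀)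
    (f : Euc N) {y : Euc N} (hy : y ∈ E)
    (hB : {z ∈ E | ⟪y, f⟫ < ⟪z, f⟫}.ncard ≤ rmin - 1) :
    ∃ d ∈ sph N, y ∈ activeExt (dualPoly ℛ₀ d) f := by
  classical
  have hr1 : 1 ≤ rmin := by omega
  set B := {z ∈ E | ⟪y, f⟫ < ⟪z, f⟫} with hBdef
  have hfinish : ∀ d : Euc N, d ≠ 0 → y ∈ Gs E rmin d →
      (∀ z ∈ Gs E rmin d, ⟪z, f⟫ ≤ ⟪y, f⟫) →
      ∃ d' ∈ sph N, y ∈ activeExt (dualPoly ℛ₀ d') f := by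
    intro d hd hyG hGf
    refine ⟨‖d‖⁻¹ • d, ?_, ?_⟩
    · rw [sph, mem_sphere_zero_iff_norm]
      exact norm_smul_inv_norm hd
    · have hsc : (0:ℝ) < ‖d‖⁻¹ := inv_pos.2 (norm_pos_iff.2 hd)
      have hGs' : Gs E rmin (‖d‖⁻¹ • d) = Gs E rmin d := Gs_smul E rmin hsc d
      rw [dualPoly_eq hE hEfin hlb hr1 H1 H2,
        activeExt_hull H1 (Gs_subset E rmin _) f, hGs']
      exact ⟨hyG, hGf⟩
  have hEd : (E \ {y}).Finite := hEfin.subset Set.diff_subset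
  have hclosed : IsClosed (convexHull ℝ (E \ {y})) := (hEd.isCompact_convexHull ℝ).isClosed
  obtain ⟨φ, u, hφ₁, hφ₂⟩ :=
    geometric_hahn_banach_closed_point (convex_convexHull ℝ _) hclosed (H1 y hy)
  set d₁ := (InnerProductSpace.toDual ℝ (Euc N)).symm φ with hd₁def
  have hφd : ∀ z : Euc N, ⟪z, d₁⟫ = φ z := by
    intro z
    rw [real_inner_comm]
    exact InnerProductSpace.toDual_symm_apply
  have hsep : ∀ z ∈ E, z ≠ y → ⟪z, d₁⟫ < ⟪y, d₁⟫ := by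
    intro z hz hne
    rw [hφd, hφd]
    exact lt_trans (hφ₁ z (subset_convexHull ℝ _ ⟨hz, hne⟩)) hφ₂
  have hd₁0 : d₁ ≠ 0 := by
    obtain ⟨z, hz, hzne⟩ := Set.exists_ne_of_one_lt_ncard (s := E) (by omega) y
    intro h0
    have h := hsep z hz hzne
    rw [h0] at h
    simp at h
  by_cases hBe : B = ∅
  · refine hfinish d₁ hd₁0 ⟨hy, ?_⟩ ?_
    · have hEq : {z ∈ E | ⟪z, d₁⟫ ≤ ⟪y, d₁⟫} = E := by
        ext z
        refine ⟨fun h => h.1, fun hz => ⟨hz, ?_⟩⟩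
        rcases eq_or_ne z y with rfl | hne
        · exact le_refl _
        · exact (hsep z hz hne).le
      rw [hEq]
      omega
    · intro z hzG
      by_contra hlt
      push_neg at hlt
      exact (Set.eq_empty_iff_forall_notMem.1 hBe z) ⟨Gs_subset E rmin d₁ hzG, hlt⟩
  · have hBne : B.Nonempty := Set.nonempty_iff_ne_empty.2 hBe
    have hBfin : B.Finite := hEfin.subset (Set.sep_subset _ _)
    have hBsub : ∀ b ∈ B, b ∈ E ∧ b ≠ y := by
      intro b hb
      refine ⟨hb.1, fun h => ?_⟩
      have := hb.2
      rw [h] at this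
      exact lt_irrefl _ this
    have hBfne : hBfin.toFinset.Nonempty := by
      rw [Set.Finite.toFinset_nonempty]
      exact hBne
    set ε := hBfin.toFinset.inf' hBfne
      (fun b => (⟪b, f⟫ - ⟪y, f⟫) / (2 * (⟪y, d₁⟫ - ⟪b, d₁⟫))) with hεdef
    have hεpos : 0 < ε := by
      rw [hεdef, Finset.lt_inf'_iff]
      intro b hbf
      have hb := hBfin.mem_toFinset.1 hbf
      obtain ⟨hbE, hbne⟩ := hBsub b hb
      exact div_pos (by linarith [hb.2]) (by linarith [hsep b hbE hbne])
    have hεle : ∀ b ∈ B, ε * (⟪y, d₁⟫ - ⟪b, d₁⟫) ≤ (⟪b, f⟫ - ⟪y, f⟫) / 2 := by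
      intro b hb
      obtain ⟨hbE, hbne⟩ := hBsub b hb
      have h2 : 0 < ⟪y, d₁⟫ - ⟪b, d₁⟫ := by linarith [hsep b hbE hbne]
      have h1 : ε ≤ (⟪b, f⟫ - ⟪y, f⟫) / (2 * (⟪y, d₁⟫ - ⟪b, d₁⟫)) := by
        rw [hεdef]
        exact Finset.inf'_le _ (hBfin.mem_toFinset.2 hb)
      have h3 : ε * (⟪y, d₁⟫ - ⟪b, d₁⟫) ≤
          ((⟪b, f⟫ - ⟪y, f⟫) / (2 * (⟪y, d₁⟫ - ⟪b, d₁⟫))) * (⟪y, d₁⟫ - ⟪b, d₁⟫) :=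
        mul_le_mul_of_nonneg_right h1 h2.le
      have h4 : ∀ X Y : ℝ, 0 < Y → (X / (2 * Y)) * Y = X / 2 := by
        intro X Y hY
        field_simp
      rw [h4 _ _ h2] at h3
      exact h3
    set g0 : Euc N → ℝ := fun z => (⟪z, f⟫ - ⟪y, f⟫) - ε * (⟪y, d₁⟫ - ⟪z, d₁⟫) with hg0
    set g1 : Euc N → ℝ := fun z => ⟪y, d₁⟫ - ⟪z, d₁⟫ with hg1
    set sf : Euc N → ℝ := fun z => if 0 ≤ g0 z then 0 else (-(g0 z)) / (g1 z - g0 z) with hsf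
    set dd : ℝ → Euc N := fun s => (1 - s) • (-f - ε • d₁) + s • d₁ with hdd
    have hip : ∀ (z : Euc N) (s : ℝ), ⟪y, dd s⟫ - ⟪z, dd s⟫ = (1 - s) * g0 z + s * g1 z := by
      intro z s
      simp only [hdd, hg0, hg1, inner_add_right, inner_smul_right, inner_sub_right,
        inner_neg_right]
      ring
    have hg1pos : ∀ z ∈ E \ {y}, 0 < g1 z := by
      intro z hz
      have := hsep z hz.1 hz.2
      simp only [hg1]
      linarith
    have hF0 : ∀ z ∈ E \ {y}, 0 ≤ sf z ∧ sf z ≤ 1 := by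
      intro z hz
      have h1 := hg1pos z hz
      simp only [hsf]
      by_cases h : 0 ≤ g0 z
      · rw [if_pos h]
        norm_num
      · push_neg at h
        rw [if_neg (not_le.2 h)]
        constructor
        · exact le_of_lt (div_pos (by linarith) (by linarith))
        · rw [div_le_one (by linarith)]
          linarith
    have hF2 : ∀ z ∈ E \ {y}, ∀ s : ℝ, 0 ≤ s → s ≤ 1 → sf z ≤ s →
        0 ≤ (1 - s) * g0 z + s * g1 z := by
      intro z hz s hs0 hs1 hsfz
      have h1 := hg1pos z hz
      by_cases h : 0 ≤ g0 z
      · have := mul_nonneg (by linarith : (0:ℝ) ≤ 1 - s) h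
        have := mul_nonneg hs0 h1.le
        linarith
      · push_neg at h
        have hsfz' : (-(g0 z)) / (g1 z - g0 z) ≤ s := by
          rw [hsf] at hsfz
          simp only at hsfz
          rwa [if_neg (not_le.2 h)] at hsfz
        have := (div_le_iff₀ (by linarith : (0:ℝ) < g1 z - g0 z)).1 hsfz'
        nlinarith
    have hF3 : ∀ z ∈ E \ {y}, ∀ s : ℝ, 0 < s → 0 < (1 - s) * g0 z + s * g1 z → sf z < s := by
      intro z hz s hs0 hpos
      have h1 := hg1pos z hz
      simp only [hsf]
      by_cases h : 0 ≤ g0 z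
      · rw [if_pos h]
        exact hs0
      · push_neg at h
        rw [if_neg (not_le.2 h)]
        rw [div_lt_iff₀ (by linarith : (0:ℝ) < g1 z - g0 z)]
        nlinarith
    have hF4 : ∀ z ∈ E, 0 < g0 z → z ∈ B := by
      intro z hz h
      by_cases hzy : z = y
      · rw [hzy] at h
        simp only [hg0] at h
        simp at h
      · have h1 := hg1pos z ⟨hz, hzy⟩
        refine ⟨hz, ?_⟩
        have hexp : g0 z = (⟪z, f⟫ - ⟪y, f⟫) - ε * g1 z := by simp [hg0, hg1]
        nlinarith [mul_pos hεpos h1]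
    -- order statistic
    have hFcard : rmin - 1 ≤ hEd.toFinset.card := by
      rw [← Set.ncard_eq_toFinset_card _ hEd]
      rw [Set.ncard_diff_singleton_of_mem hy]
      omega
    obtain ⟨z₀, hz₀F, hQ, hP⟩ := order_stat hEd.toFinset sf (rmin - 1) (by omega) hFcard
    have hz₀E : z₀ ∈ E \ {y} := hEd.mem_toFinset.1 hz₀F
    obtain ⟨hs0, hs1⟩ := hF0 z₀ hz₀E
    set ss := sf z₀ with hssdef
    set d := dd ss with hddef2
    have hG1 : ∀ b ∈ B, 0 < ⟪y, d⟫ - ⟪b, d⟫ := by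
      intro b hb
      obtain ⟨hbE, hbne⟩ := hBsub b hb
      have hg1b := hg1pos b ⟨hbE, hbne⟩
      have hg0b : 0 < g0 b := by
        have h1 := hεle b hb
        have h2 : 0 < ⟪b, f⟫ - ⟪y, f⟫ := by linarith [hb.2]
        have hexp : g0 b = (⟪b, f⟫ - ⟪y, f⟫) - ε * (⟪y, d₁⟫ - ⟪b, d₁⟫) := by simp [hg0]
        linarith
      rw [hddef2, hip b ss]
      rcases lt_or_ge ss 1 with hlt | hge
      · have := mul_pos (by linarith : (0:ℝ) < 1 - ss) hg0b
        have := mul_nonneg hs0 hg1b.le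
        linarith
      · have hss1 : ss = 1 := le_antisymm hs1 hge
        rw [hss1]
        have hexp : (1 - (1:ℝ)) * g0 b + 1 * g1 b = g1 b := by ring
        rw [hexp]
        exact hg1b
    have hG2 : y ∈ Gs E rmin d := by
      refine ⟨hy, ?_⟩
      set Qf := hEd.toFinset.filter (fun z => sf z ≤ ss) with hQf
      have hsub : insert y (↑Qf : Set (Euc N)) ⊆ {z ∈ E | ⟪z, d⟫ ≤ ⟪y, d⟫} := by
        intro z hz
        rcases Set.mem_insert_iff.1 hz with rfl | hzQ
        · exact ⟨hy, le_refl _⟩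
        · have hzf := Finset.mem_filter.1 hzQ
          have hzE : z ∈ E \ {y} := hEd.mem_toFinset.1 hzf.1
          have h0 := hF2 z hzE ss hs0 hs1 hzf.2
          rw [← hip z ss] at h0
          exact ⟨hzE.1, by rw [hddef2]; linarith⟩
      have hyQf : y ∉ (↑Qf : Set (Euc N)) := by
        intro h
        exact (hEd.mem_toFinset.1 (Finset.filter_subset _ _ h)).2 rfl
      have hcount : rmin ≤ (insert y (↑Qf : Set (Euc N))).ncard := by
        rw [Set.ncard_insert_of_notMem hyQf (Qf.finite_toSet), Set.ncard_coe_finset]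
        omega
      exact le_trans hcount
        (Set.ncard_le_ncard hsub (hEfin.subset (Set.sep_subset _ _)))
    have hG3 : ∀ b ∈ B, b ∉ Gs E rmin d := by
      intro b hb hbG
      have hbyd := hG1 b hb
      rcases eq_or_lt_of_le hs0 with hs00 | hs0pos
      · -- ss = 0 : low set is inside B
        have hsub : {z ∈ E | ⟪z, d⟫ ≤ ⟪b, d⟫} ⊆ B := by
          intro z hz
          have hzy : 0 < ⟪y, d⟫ - ⟪z, d⟫ := by linarith [hz.2]
          have h0 : 0 < (1 - ss) * g0 z + ss * g1 z := by
            rw [← hip z ss, ← hddef2]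
            exact hzy
          rw [← hs00] at h0
          have hexp0 : (1 - (0:ℝ)) * g0 z + 0 * g1 z = g0 z := by ring
          have hg0z : 0 < g0 z := by linarith
          exact hF4 z hz.1 hg0z
        have h1 : rmin ≤ B.ncard :=
          le_trans hbG.2 (Set.ncard_le_ncard hsub hBfin)
        omega
      · -- ss > 0 : low set is inside the strict filter
        set Pf := hEd.toFinset.filter (fun z => sf z < ss) with hPf
        have hsub : {z ∈ E | ⟪z, d⟫ ≤ ⟪b, d⟫} ⊆ (↑Pf : Set (Euc N)) := by
          intro z hz
          have hzy : 0 < ⟪y, d⟫ - ⟪z, d⟫ := by linarith [hz.2]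
          have hzny : z ≠ y := by
            intro h
            rw [h, sub_self] at hzy
            exact lt_irrefl _ hzy
          have h0 : 0 < (1 - ss) * g0 z + ss * g1 z := by
            rw [← hip z ss, ← hddef2]
            exact hzy
          have := hF3 z ⟨hz.1, hzny⟩ ss hs0pos h0
          exact Finset.mem_coe.2 (Finset.mem_filter.2 ⟨hEd.mem_toFinset.2 ⟨hz.1, hzny⟩, this⟩)
        have h1 : rmin ≤ Pf.card := by
          have := le_trans hbG.2 (Set.ncard_le_ncard hsub (Pf.finite_toSet))
          rwa [Set.ncard_coe_finset] at this
        omega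
    have hGf : ∀ z ∈ Gs E rmin d, ⟪z, f⟫ ≤ ⟪y, f⟫ := by
      intro z hz
      by_contra hlt
      push_neg at hlt
      exact hG3 z ⟨Gs_subset E rmin d hz, hlt⟩ hz
    have hdne : d ≠ 0 := by
      obtain ⟨b, hb⟩ := hBne
      intro h0
      have := hG1 b hb
      rw [h0, inner_zero_right, inner_zero_right, sub_self] at this
      exact lt_irrefl _ this
    exact hfinish d hdne hG2 hGf

end main

end DSDaux

open DSDaux in
/-- Proposition on polytopes of `ℜ₂`. Indices of the enumeration are
0-based: the paper's `{x′_1,…,x′_ℓ}` is `x' '' (Set.Iic ℓ)` with `ℓ` 0-based, and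
`x′_{r_min}` is `x' (rmin - 1)`. -/
theorem dual_square_description {N : ℕ} (ℛ₀ : Set (Set (Euc N))) (hfin : ℛ₀.Finite)
    (hpoly : ∀ Ω ∈ ℛ₀, IsPolytope Ω)
    (E : Set (Euc N)) (hE : E = extFam ℛ₀) (R : ℕ) (hR : R = E.ncard)
    (rmin : ℕ) (hrmin : IsLeast {r : ℕ | ∃ Ω ∈ ℛ₀, r = (Ω ∩ E).ncard} rmin)
    (hrmin1 : 1 < rmin) (hrminR : rmin < R)
    (H1 : ∀ x ∈ E, x ∉ convexHull ℝ (E \ {x}))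
    (H2 : ∀ A ⊆ E, A.ncard = rmin → convexHull ℝ A ∈ ℛ₀)
    (d₀ : Euc N) (hd₀ : d₀ ∈ sph N)
    (x' : ℕ → Euc N) (hx' : IsCompatEnum E R d₀ x')
    (k : ℕ) (hk : k < rmin)
    (hΩ₁ : dualPoly ℛ₀ d₀ = convexHull ℝ (E \ x' '' (Set.Iio k)))
    (ℓ : ℕ) (hℓ : IsGreatest {i : ℕ | i < R ∧ ⟪x' i, d₀⟫ = ⟪x' (rmin - 1), d₀⟫} ℓ) :
    dualPoly (dualFam ℛ₀) (-d₀) = convexHull ℝ (x' '' (Set.Iic ℓ)) ∧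
      ∀ Ω ∈ dualFam (dualFam ℛ₀), rmin ≤ (Ω ∩ E).ncard := by
  classical
  obtain ⟨hinj, himg, hmono⟩ := hx'
  have hEfin : E.Finite := by
    rw [hE, extFam]
    exact hfin.biUnion (fun Ω hΩ => (hpoly Ω hΩ).2.2.2)
  have hlb : ∀ Ω ∈ ℛ₀, rmin ≤ (Ω ∩ E).ncard := fun Ω hΩ => hrmin.2 ⟨Ω, hΩ, rfl⟩
  have hr1 : 1 ≤ rmin := by omega
  have hr2 : 2 ≤ rmin := hrmin1
  have hrR' : rmin < E.ncard := hR ▸ hrminR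
  have hℓR : ℓ < R := hℓ.1.1
  have hrml : rmin - 1 ≤ ℓ := hℓ.2 ⟨by omega, rfl⟩
  have hT : {z ∈ E | ⟪z, d₀⟫ ≤ ⟪x' (rmin - 1), d₀⟫} = x' '' (Set.Iic ℓ) := by
    ext z
    constructor
    · rintro ⟨hzE, hzle⟩
      rw [← himg] at hzE
      obtain ⟨i, hiR', rfl⟩ := hzE
      have hiR : i < R := hiR'
      refine ⟨i, Set.mem_Iic.2 ?_, rfl⟩
      by_contra hgt
      push_neg at hgt
      have h1 : ⟪x' (rmin - 1), d₀⟫ ≤ ⟪x' i, d₀⟫ := hmono _ _ (by omega) hiR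
      have heq : ⟪x' i, d₀⟫ = ⟪x' (rmin - 1), d₀⟫ := le_antisymm hzle h1
      have := hℓ.2 ⟨hiR, heq⟩
      omega
    · rintro ⟨i, hi, rfl⟩
      have hi' : i ≤ ℓ := hi
      have hiR : i < R := lt_of_le_of_lt hi' hℓR
      have hzE : x' i ∈ E := by
        rw [← himg]
        exact ⟨i, hiR, rfl⟩
      refine ⟨hzE, ?_⟩
      rcases le_or_gt i (rmin - 1) with hle | hgt
      · exact hmono i (rmin - 1) hle (by omega)
      · have h2 : ⟪x' i, d₀⟫ ≤ ⟪x' ℓ, d₀⟫ := hmono _ _ hi' hℓR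
        rw [hℓ.1.2] at h2
        exact h2
  have hTsubE : x' '' (Set.Iic ℓ) ⊆ E := by
    rw [← hT]
    exact Set.sep_subset _ _
  have hIiccard : (Set.Iic ℓ).ncard = ℓ + 1 := by
    rw [← Finset.coe_Iic, Set.ncard_coe_finset, Nat.card_Iic]
  have hTcard : rmin ≤ (x' '' (Set.Iic ℓ)).ncard := by
    rw [Set.ncard_image_of_injOn
      (hinj.mono (fun i (hi : i ∈ Set.Iic ℓ) => lt_of_le_of_lt hi hℓR)), hIiccard]
    omega
  have hUnion : (⋃ Ω ∈ dualFam ℛ₀, activeExt Ω (-d₀)) = x' '' (Set.Iic ℓ) := by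
    apply subset_antisymm
    · intro z hz
      simp only [Set.mem_iUnion, exists_prop] at hz
      obtain ⟨Ω, hΩ, hzA⟩ := hz
      obtain ⟨d, hd, rfl⟩ := hΩ
      rw [dualPoly_eq hE hEfin hlb hr1 H1 H2 d,
        activeExt_hull H1 (Gs_subset E rmin d) _] at hzA
      obtain ⟨hzG, hzmax⟩ := hzA
      have hinter : (Gs E rmin d ∩ x' '' (Set.Iic ℓ)).Nonempty := by
        rw [Set.nonempty_iff_ne_empty]
        intro hemp
        have hsub : x' '' (Set.Iic ℓ) ⊆ E \ Gs E rmin d := by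
          intro w hw
          refine ⟨hTsubE hw, fun hwG => ?_⟩
          exact Set.eq_empty_iff_forall_notMem.1 hemp w ⟨hwG, hw⟩
        have h1 := Set.ncard_le_ncard hsub (hEfin.subset Set.diff_subset)
        have h2 := compl_Gs (E := E) hEfin hr1 d
        omega
      obtain ⟨w, hwG, hwT⟩ := hinter
      have h1 : ⟪w, -d₀⟫ ≤ ⟪z, -d₀⟫ := hzmax w hwG
      rw [inner_neg_right, inner_neg_right] at h1
      have h2 : ⟪z, d₀⟫ ≤ ⟪w, d₀⟫ := by linarith
      have hwle : ⟪w, d₀⟫ ≤ ⟪x' (rmin - 1), d₀⟫ := by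
        have : w ∈ {z ∈ E | ⟪z, d₀⟫ ≤ ⟪x' (rmin - 1), d₀⟫} := by
          rw [hT]
          exact hwT
        exact this.2
      rw [← hT]
      exact ⟨Gs_subset E rmin d hzG, le_trans h2 hwle⟩
    · intro z hz
      have hzE : z ∈ E := hTsubE hz
      have hzle : ⟪z, d₀⟫ ≤ ⟪x' (rmin - 1), d₀⟫ := by
        have : z ∈ {z ∈ E | ⟪z, d₀⟫ ≤ ⟪x' (rmin - 1), d₀⟫} := by
          rw [hT]
          exact hz
        exact this.2
      have hBz : {w ∈ E | ⟪z, -d₀⟫ < ⟪w, -d₀⟫}.ncard ≤ rmin - 1 := by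
        have hsub : {w ∈ E | ⟪z, -d₀⟫ < ⟪w, -d₀⟫} ⊆ x' '' (Set.Iio (rmin - 1)) := by
          rintro w ⟨hwE, hwlt⟩
          rw [inner_neg_right, inner_neg_right] at hwlt
          have hwlt' : ⟪w, d₀⟫ < ⟪z, d₀⟫ := by linarith
          rw [← himg] at hwE
          obtain ⟨j, hjR', rfl⟩ := hwE
          have hjR : j < R := hjR'
          refine ⟨j, ?_, rfl⟩
          have : j < rmin - 1 := by
            by_contra hge
            push_neg at hge
            have := hmono (rmin - 1) j hge hjR
            linarith
          exact this
        have hIiofin : (Set.Iio (rmin - 1)).Finite := Set.finite_Iio _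
        have h1 := Set.ncard_le_ncard hsub (hIiofin.image x')
        have h2 : (x' '' (Set.Iio (rmin - 1))).ncard ≤ rmin - 1 := by
          have h3 := Set.ncard_image_le (s := Set.Iio (rmin - 1)) (f := x') hIiofin
          have h4 : (Set.Iio (rmin - 1)).ncard = rmin - 1 := by
            rw [← Finset.coe_Iio, Set.ncard_coe_finset, Nat.card_Iio]
          omega
        omega
      obtain ⟨d, hd, hzA⟩ := exists_dir hE hEfin hlb hr2 hrR' H1 H2 (-d₀) hzE hBz
      exact Set.mem_biUnion (⟨d, hd, rfl⟩ : dualPoly ℛ₀ d ∈ dualFam ℛ₀) hzA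
  constructor
  · exact congrArg (convexHull ℝ) hUnion
  · intro Ω hΩ
    obtain ⟨f, hf, rfl⟩ := hΩ
    set Y := {y ∈ E | {w ∈ E | ⟪y, f⟫ < ⟪w, f⟫}.ncard ≤ rmin - 1} with hYdef
    have hYfin : Y.Finite := hEfin.subset (Set.sep_subset _ _)
    have hYsub : Y ⊆ dualPoly (dualFam ℛ₀) f ∩ E := by
      intro y hy
      refine ⟨?_, hy.1⟩
      obtain ⟨d, hd, hyA⟩ := exists_dir hE hEfin hlb hr2 hrR' H1 H2 f hy.1 hy.2
      exact subset_convexHull ℝ _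
        (Set.mem_biUnion (⟨d, hd, rfl⟩ : dualPoly ℛ₀ d ∈ dualFam ℛ₀) hyA)
    have hYcard : rmin ≤ Y.ncard := by
      by_contra hlt
      push_neg at hlt
      have hEY : (E \ Y).Nonempty := by
        rw [Set.nonempty_iff_ne_empty]
        intro hemp
        have hEsub : E ⊆ Y := by
          intro w hw
          by_contra h
          exact Set.eq_empty_iff_forall_notMem.1 hemp w ⟨hw, h⟩
        have := Set.ncard_le_ncard hEsub hYfin
        omega
      obtain ⟨ystar, hystar, hmax⟩ :=
        Set.exists_max_image (E \ Y) (fun w : Euc N => ⟪w, f⟫)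
          (hEfin.subset Set.diff_subset) hEY
      have hsub : {w ∈ E | ⟪ystar, f⟫ < ⟪w, f⟫} ⊆ Y := by
        rintro w ⟨hwE, hwlt⟩
        by_contra hwY
        exact absurd (hmax w ⟨hwE, hwY⟩) (not_le.2 hwlt)
      have h1 : {w ∈ E | ⟪ystar, f⟫ < ⟪w, f⟫}.ncard ≤ rmin - 1 :=
        le_trans (Set.ncard_le_ncard hsub hYfin) (by omega)
      exact hystar.2 ⟨hystar.1, h1⟩
    exact le_trans hYcard (Set.ncard_le_ncard hYsub
      (hEfin.subset Set.inter_subset_right))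
end
end

section
/- Let ℜ₀ be a finite family of polytopes in ℝ^N satisfying (H1) and (H2). Then for every direction d ∈ S one has Ω_{ℜ₀}(d) = Ω_{ℜ₂}(d), where ℜ₂ = F(F(ℜ₀)); i.e. the dual polytopes of ℜ₀ and of ℜ₂ in every direction coincide (hence F(ℜ₀) = F(ℜ₂)). -/
open scoped RealInnerProductSpace
open Set

noncomputable section

namespace St14
variable {N : ℕ}

/-- lower level set -/
def LS (E : Set (Euc N)) (d x : Euc N) : Set (Euc N) := {y ∈ E | ⟪y, d⟫ ≤ ⟪x, d⟫}

/-- points of rank ≥ k -/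
def beta (E : Set (Euc N)) (k : ℕ) (d : Euc N) : Set (Euc N) := {x ∈ E | k ≤ (LS E d x).ncard}

lemma LS_subset {E : Set (Euc N)} {d x : Euc N} : LS E d x ⊆ E := fun _ h => h.1

lemma beta_subset {E : Set (Euc N)} {k : ℕ} {d : Euc N} : beta E k d ⊆ E := fun _ h => h.1

lemma inner_linear (d : Euc N) : IsLinearMap ℝ (fun y : Euc N => ⟪y, d⟫) :=
  ⟨fun a b => inner_add_left a b d, fun c a => real_inner_smul_left a d c⟩

/-- strict exposing functional: x strictly above the rest of E -/
lemma exists_expose_max {E : Set (Euc N)} (hE : E.Finite)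
    (H1 : ∀ x ∈ E, x ∉ convexHull ℝ (E \ {x})) {x : Euc N} (hx : x ∈ E) :
    ∃ g : Euc N, ∀ y ∈ E, y ≠ x → ⟪y, g⟫ < ⟪x, g⟫ := by
  have hcl : IsClosed (convexHull ℝ (E \ {x})) :=
    (((hE.diff : (E \ {x}).Finite)).isCompact_convexHull ℝ).isClosed
  obtain ⟨f, u, hfu, hux⟩ :=
    geometric_hahn_banach_closed_point (convex_convexHull ℝ _) hcl (H1 x hx)
  refine ⟨(InnerProductSpace.toDual ℝ (Euc N)).symm f, fun y hy hyx => ?_⟩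
  have h1 : ⟪y, (InnerProductSpace.toDual ℝ (Euc N)).symm f⟫ = f y := by
    rw [real_inner_comm]; exact InnerProductSpace.toDual_symm_apply
  have h2 : ⟪x, (InnerProductSpace.toDual ℝ (Euc N)).symm f⟫ = f x := by
    rw [real_inner_comm]; exact InnerProductSpace.toDual_symm_apply
  rw [h1, h2]
  have := hfu y (subset_convexHull ℝ _ ⟨hy, hyx⟩)
  linarith [hux]

lemma exists_expose_min {E : Set (Euc N)} (hE : E.Finite)
    (H1 : ∀ x ∈ E, x ∉ convexHull ℝ (E \ {x})) {x : Euc N} (hx : x ∈ E) :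
    ∃ g : Euc N, ∀ y ∈ E, y ≠ x → ⟪x, g⟫ < ⟪y, g⟫ := by
  obtain ⟨g, hg⟩ := exists_expose_max hE H1 hx
  exact ⟨-g, fun y hy hyx => by
    have := hg y hy hyx
    simpa [inner_neg_right] using neg_lt_neg this⟩

/-- a point not in the hull of the others is an extreme point of the hull -/
lemma mem_extremePoints_convexHull {A : Set (Euc N)} (hA : A.Finite) {x : Euc N}
    (hx : x ∈ A) (hnx : x ∉ convexHull ℝ (A \ {x})) :
    x ∈ Set.extremePoints ℝ (convexHull ℝ A) := by
  -- separating functional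
  have hcl : IsClosed (convexHull ℝ (A \ {x})) := (((hA.diff : (A \ {x}).Finite)).isCompact_convexHull ℝ).isClosed
  obtain ⟨f, u, hfu, hux⟩ :=
    geometric_hahn_banach_closed_point (convex_convexHull ℝ _) hcl hnx
  -- every z in conv A has f z ≤ f x, with equality iff z = x
  have hkey : ∀ z ∈ convexHull ℝ A, f z ≤ f x ∧ (f z = f x → z = x) := by
    rcases Set.eq_empty_or_nonempty (A \ {x}) with hemp | hne
    · have hAx : A = {x} := by
        apply Set.eq_singleton_iff_unique_mem.mpr
        refine ⟨hx, fun y hy => ?_⟩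
        by_contra hyx
        exact (Set.eq_empty_iff_forall_notMem.mp hemp y) ⟨hy, hyx⟩
      intro z hz
      rw [hAx, convexHull_singleton] at hz
      simp only [Set.mem_singleton_iff] at hz
      subst hz; exact ⟨le_refl _, fun _ => rfl⟩
    · intro z hz
      have hins : A = insert x (A \ {x}) := by
        ext y; constructor
        · intro hy; by_cases h : y = x
          · exact h ▸ Set.mem_insert _ _
          · exact Set.mem_insert_of_mem _ ⟨hy, h⟩
        · rintro (rfl | ⟨hy, _⟩); exact hx; exact hy
      rw [hins, convexHull_insert hne, mem_convexJoin] at hz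
      obtain ⟨x', hx', w, hw, hzw⟩ := hz
      rw [Set.mem_singleton_iff] at hx'
      obtain ⟨a, b, ha, hb, hab, hz⟩ := hzw
      rw [hx'] at hz
      have hfw : f w < f x := lt_trans (hfu w hw) hux
      have hfz : f z = a * f x + b * f w := by
        rw [← hz]; simp [map_add, map_smul]
      have haux : a * f x + b * f x = f x := by rw [← add_mul, hab, one_mul]
      have h1 : a * f x ≤ a * f x := le_refl _
      have h2 : b * f w ≤ b * f x := mul_le_mul_of_nonneg_left hfw.le hb
      constructor
      · rw [hfz]; linarith
      · intro heq
        have hb0 : b = 0 := by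
          by_contra hbne
          have hbpos : 0 < b := lt_of_le_of_ne hb (Ne.symm hbne)
          have := mul_lt_mul_of_pos_left hfw hbpos
          rw [hfz] at heq; linarith
        have ha1 : a = 1 := by linarith
        rw [← hz, hb0, ha1]; simp
  rw [mem_extremePoints]
  refine ⟨subset_convexHull ℝ _ hx, fun x₁ hx₁ x₂ hx₂ hseg => ?_⟩
  obtain ⟨a, b, ha, hb, hab, hxeq⟩ := hseg
  have h1 := hkey x₁ hx₁
  have h2 := hkey x₂ hx₂
  have hfx : f x = a * f x₁ + b * f x₂ := by rw [← hxeq]; simp [map_add, map_smul]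
  have e1 : f x₁ = f x := by
    by_contra hne
    have hlt : f x₁ < f x := lt_of_le_of_ne h1.1 hne
    have c1 := mul_lt_mul_of_pos_left hlt ha
    have c2 := mul_le_mul_of_nonneg_left h2.1 hb.le
    have haux : a * f x + b * f x = f x := by rw [← add_mul, hab, one_mul]
    linarith
  have e2 : f x₂ = f x := by
    by_contra hne
    have hlt : f x₂ < f x := lt_of_le_of_ne h2.1 hne
    have c1 := mul_lt_mul_of_pos_left hlt hb
    have c2 := mul_le_mul_of_nonneg_left h1.1 ha.le
    have haux : a * f x + b * f x = f x := by rw [← add_mul, hab, one_mul]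
    linarith
  exact ⟨h1.2 e1, h2.2 e2⟩

end St14

namespace St14
variable {N : ℕ}


lemma extremePoints_convexHull_eq {A : Set (Euc N)} (hA : A.Finite)
    (hInd : ∀ x ∈ A, x ∉ convexHull ℝ (A \ {x})) :
    Set.extremePoints ℝ (convexHull ℝ A) = A := by
  apply Set.Subset.antisymm extremePoints_convexHull_subset
  intro x hx
  exact mem_extremePoints_convexHull hA hx (hInd x hx)

lemma forall_hull_le {A : Set (Euc N)} {d x : Euc N}
    (hmax : ∀ y ∈ A, ⟪y, d⟫ ≤ ⟪x, d⟫) :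
    ∀ y ∈ convexHull ℝ A, ⟪y, d⟫ ≤ ⟪x, d⟫ := by
  intro y hy
  have hconv : Convex ℝ {y : Euc N | ⟪y, d⟫ ≤ ⟪x, d⟫} :=
    convex_halfSpace_le (inner_linear d) _
  exact convexHull_min hmax hconv hy

lemma activeExt_convexHull {A : Set (Euc N)} (hA : A.Finite)
    (hInd : ∀ x ∈ A, x ∉ convexHull ℝ (A \ {x})) (d : Euc N) :
    activeExt (convexHull ℝ A) d = {x ∈ A | ∀ y ∈ A, ⟪y, d⟫ ≤ ⟪x, d⟫} := by
  ext x
  constructor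
  · rintro ⟨hx, hmax⟩
    rw [extremePoints_convexHull_eq hA hInd] at hx
    exact ⟨hx, fun y hy => hmax y (subset_convexHull ℝ _ hy)⟩
  · rintro ⟨hx, hmax⟩
    refine ⟨?_, forall_hull_le hmax⟩
    rw [extremePoints_convexHull_eq hA hInd]
    exact hx

/-- the set of low-rank points has at most k-1 elements -/
lemma compl_beta_small {E : Set (Euc N)} (hE : E.Finite) (k : ℕ) (d : Euc N) :
    (E \ beta E k d).ncard ≤ k - 1 := by
  set T := E \ beta E k d with hT
  rcases Set.eq_empty_or_nonempty T with hemp | hne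
  · simp [hemp]
  · have hTfin : T.Finite := hE.diff
    obtain ⟨y₀, hy₀, hmax⟩ := Set.exists_max_image T (fun y : Euc N => ⟪y, d⟫) hTfin hne
    have hy₀E : y₀ ∈ E := hy₀.1
    have hsub : T ⊆ LS E d y₀ := fun y hy => ⟨hy.1, hmax y hy⟩
    have h1 : T.ncard ≤ (LS E d y₀).ncard :=
      Set.ncard_le_ncard hsub (hE.subset LS_subset)
    have h2 : ¬ (k ≤ (LS E d y₀).ncard) := fun hk => hy₀.2 ⟨hy₀E, hk⟩
    omega

lemma beta_large {E : Set (Euc N)} (hE : E.Finite) (k : ℕ) (d : Euc N) :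
    E.ncard - (k - 1) ≤ (beta E k d).ncard := by
  have h := compl_beta_small hE k d
  have h2 : (E \ beta E k d).ncard + (beta E k d).ncard = E.ncard :=
    Set.ncard_diff_add_ncard_of_subset beta_subset hE
  omega

end St14

namespace St14
variable {N : ℕ}

/-- separation predicate: U strictly below the rest of E -/
def Sep (E U : Set (Euc N)) (φ : Euc N) : Prop :=
  ∀ u ∈ U, ∀ z ∈ E, z ∉ U → ⟪u, φ⟫ < ⟪z, φ⟫

lemma exists_delta {α : Type*} {S : Set α} (hS : S.Finite) (f g : α → ℝ)
    (hf : ∀ a ∈ S, 0 < f a) : ∃ δ : ℝ, 0 < δ ∧ ∀ a ∈ S, g a < δ * f a := by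
  rcases S.eq_empty_or_nonempty with hemp | hne
  · exact ⟨1, one_pos, by simp [hemp]⟩
  · obtain ⟨a₀, ha₀, hmax⟩ := Set.exists_max_image S (fun a => g a / f a) hS hne
    refine ⟨max 1 (g a₀ / f a₀ + 1), lt_of_lt_of_le one_pos (le_max_left _ _), fun a ha => ?_⟩
    have h1 : g a / f a ≤ g a₀ / f a₀ := hmax a ha
    have h2 : g a₀ / f a₀ + 1 ≤ max 1 (g a₀ / f a₀ + 1) := le_max_right _ _
    have h3 : g a / f a < max 1 (g a₀ / f a₀ + 1) := by linarith
    have h4 : g a / f a * f a = g a := div_mul_cancel₀ _ (hf a ha).ne'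
    rw [← h4]
    exact mul_lt_mul_of_pos_right h3 (hf a ha)

lemma step_lemma {E U : Set (Euc N)} (hE : E.Finite)
    (H1 : ∀ x ∈ E, x ∉ convexHull ℝ (E \ {x}))
    {x : Euc N} (hx : x ∈ E) (hxU : x ∉ U) (hU : U ⊆ E)
    (hex : ∃ y ∈ E, y ∉ U ∧ y ≠ x)
    {φ : Euc N} (hφ : Sep E U φ) :
    ∃ y', y' ∈ E ∧ y' ∉ U ∧ y' ≠ x ∧ ∃ ψ, Sep E (insert y' U) ψ := by
  obtain ⟨h, hh⟩ := exists_expose_max hE H1 hx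
  set D : Set (Euc N) := {y ∈ E | y ∉ U ∧ y ≠ x} with hD
  have hDfin : D.Finite := hE.subset (fun y hy => hy.1)
  have hDne : D.Nonempty := by obtain ⟨y, hy1, hy2, hy3⟩ := hex; exact ⟨y, hy1, hy2, hy3⟩
  have hc : ∀ y ∈ E, y ≠ x → 0 < ⟪x, h⟫ - ⟪y, h⟫ := fun y hy hyx => by
    have := hh y hy hyx; linarith
  set c : Euc N → ℝ := fun y => ⟪x, h⟫ - ⟪y, h⟫ with hcdef
  set tf : Euc N → ℝ := fun y => (⟪y, φ⟫ - ⟪x, φ⟫) / c y with htf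
  obtain ⟨y₁, hy₁D, hy₁min⟩ := Set.exists_min_image D tf hDfin hDne
  set ts : ℝ := max 0 (tf y₁) with hts
  have hts0 : 0 ≤ ts := le_max_left _ _
  set φt : Euc N := φ + ts • h with hφt
  have hval : ∀ z : Euc N, ⟪z, φt⟫ = ⟪z, φ⟫ + ts * ⟪z, h⟫ := fun z => by
    rw [hφt, inner_add_right, real_inner_smul_right]
  -- G1 : u strictly below x
  have hG1 : ∀ u ∈ U, ⟪u, φt⟫ < ⟪x, φt⟫ := by
    intro u hu
    have h1 : ⟪u, φ⟫ < ⟪x, φ⟫ := hφ u hu x hx hxU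
    have hux : u ≠ x := fun he => hxU (he ▸ hu)
    have h2 : ⟪u, h⟫ < ⟪x, h⟫ := hh u (hU hu) hux
    have h3 : ts * ⟪u, h⟫ ≤ ts * ⟪x, h⟫ := mul_le_mul_of_nonneg_left h2.le hts0
    rw [hval, hval]; linarith
  -- G2 : u strictly below any z ∈ D
  have hG2 : ∀ u ∈ U, ∀ z ∈ D, ⟪u, φt⟫ < ⟪z, φt⟫ := by
    intro u hu z hz
    rcases le_or_gt 0 (tf y₁) with hpos | hneg
    · -- ts = tf y₁ ≤ tf z, so x ≤ z at time ts
      have htseq : ts = tf y₁ := max_eq_right hpos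
      have h1 : ts ≤ tf z := htseq ▸ hy₁min z hz
      have hcz : 0 < c z := hc z hz.1 hz.2.2
      have h2 : ts * c z ≤ tf z * c z := mul_le_mul_of_nonneg_right h1 hcz.le
      have h3 : tf z * c z = ⟪z, φ⟫ - ⟪x, φ⟫ := div_mul_cancel₀ _ hcz.ne'
      have h4 : ⟪x, φt⟫ ≤ ⟪z, φt⟫ := by
        rw [hval, hval]
        have : ts * ⟪x, h⟫ - ts * ⟪z, h⟫ = ts * c z := by ring
        nlinarith [h2, h3]
      exact lt_of_lt_of_le (hG1 u hu) h4
    · -- ts = 0, φt = φ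
      have htseq : ts = 0 := max_eq_left hneg.le
      have : φt = φ := by rw [hφt, htseq, zero_smul, add_zero]
      rw [this]
      exact hφ u hu z hz.1 hz.2.1
  -- G3 : y₁ at most x at time ts
  have hG3 : ⟪y₁, φt⟫ ≤ ⟪x, φt⟫ := by
    have hcy : 0 < c y₁ := hc y₁ hy₁D.1 hy₁D.2.2
    have h1 : tf y₁ ≤ ts := le_max_right _ _
    have h2 : tf y₁ * c y₁ ≤ ts * c y₁ := mul_le_mul_of_nonneg_right h1 hcy.le
    have h3 : tf y₁ * c y₁ = ⟪y₁, φ⟫ - ⟪x, φ⟫ := div_mul_cancel₀ _ hcy.ne'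
    rw [hval, hval]
    have : ts * ⟪x, h⟫ - ts * ⟪y₁, h⟫ = ts * c y₁ := by ring
    nlinarith [h2, h3]
  -- y* : minimizer of φt over D
  obtain ⟨ys, hysD, hysmin⟩ := Set.exists_min_image D (fun z => ⟪z, φt⟫) hDfin hDne
  have hG4 : ∀ z ∈ E, z ∉ U → ⟪ys, φt⟫ ≤ ⟪z, φt⟫ := by
    intro z hz hzU
    by_cases hzx : z = x
    · subst hzx
      exact le_trans (hysmin y₁ hy₁D) hG3
    · exact hysmin z ⟨hz, hzU, hzx⟩
  have hG5 : ∀ u ∈ U, ⟪u, φt⟫ < ⟪ys, φt⟫ := fun u hu => hG2 u hu ys hysD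
  obtain ⟨g, hg⟩ := exists_expose_min hE H1 hysD.1
  obtain ⟨δ, hδ0, hδ⟩ := exists_delta (hE.subset hU)
    (fun u => ⟪ys, φt⟫ - ⟪u, φt⟫) (fun u => ⟪u, g⟫ - ⟪ys, g⟫)
    (fun u hu => by
      show 0 < ⟪ys, φt⟫ - ⟪u, φt⟫
      have := hG5 u hu; linarith)
  refine ⟨ys, hysD.1, hysD.2.1, hysD.2.2, δ • φt + g, ?_⟩
  have hψval : ∀ z : Euc N, ⟪z, δ • φt + g⟫ = δ * ⟪z, φt⟫ + ⟪z, g⟫ := fun z => by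
    rw [inner_add_right, real_inner_smul_right]
  -- key : ys strictly below any z ∉ insert ys U
  have hkey : ∀ z ∈ E, z ∉ insert ys U → ⟪ys, δ • φt + g⟫ < ⟪z, δ • φt + g⟫ := by
    intro z hz hzins
    have hzys : z ≠ ys := fun he => hzins (he ▸ Set.mem_insert _ _)
    have hzU : z ∉ U := fun hc => hzins (Set.mem_insert_of_mem _ hc)
    have h1 : ⟪ys, φt⟫ ≤ ⟪z, φt⟫ := hG4 z hz hzU
    have h2 : ⟪ys, g⟫ < ⟪z, g⟫ := hg z hz hzys
    have h3 : δ * ⟪ys, φt⟫ ≤ δ * ⟪z, φt⟫ := mul_le_mul_of_nonneg_left h1 hδ0.le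
    rw [hψval, hψval]; linarith
  intro u hu z hz hzins
  rcases Set.mem_insert_iff.mp hu with rfl | huU
  · exact hkey z hz hzins
  · have hstep : ⟪u, δ • φt + g⟫ < ⟪ys, δ • φt + g⟫ := by
      have h5 := hδ u huU
      rw [hψval, hψval]
      linarith
    by_cases hzys : z = ys
    · exact hzys ▸ hstep
    · exact lt_trans hstep (hkey z hz hzins)

end St14

namespace St14
variable {N : ℕ}

lemma grow {E : Set (Euc N)} (hE : E.Finite)
    (H1 : ∀ x ∈ E, x ∉ convexHull ℝ (E \ {x})) {x : Euc N} (hx : x ∈ E) :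
    ∀ (k : ℕ) (U : Set (Euc N)), U ⊆ E → x ∉ U → (∃ φ, Sep E U φ) →
      U.ncard + k + 1 ≤ E.ncard →
      ∃ W, U ⊆ W ∧ W ⊆ E ∧ x ∉ W ∧ W.ncard = U.ncard + k ∧ ∃ ψ, Sep E W ψ := by
  intro k
  induction k with
  | zero =>
    intro U hU hxU hsep _
    exact ⟨U, subset_rfl, hU, hxU, by omega, hsep⟩
  | succ k ih =>
    intro U hU hxU hsep hcard
    have hUfin : U.Finite := hE.subset hU
    -- find a fresh point
    have hex : ∃ y ∈ E, y ∉ U ∧ y ≠ x := by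
      by_contra hno
      push_neg at hno
      have hsub : E ⊆ insert x U := by
        intro y hy
        by_cases hyU : y ∈ U
        · exact Set.mem_insert_of_mem _ hyU
        · have := hno y hy hyU
          exact this ▸ Set.mem_insert _ _
      have h1 : E.ncard ≤ (insert x U).ncard := Set.ncard_le_ncard hsub (hUfin.insert x)
      have h2 : (insert x U).ncard ≤ U.ncard + 1 := Set.ncard_insert_le _ _
      omega
    obtain ⟨φ, hφ⟩ := hsep
    obtain ⟨y', hy'E, hy'U, hy'x, ψ, hψ⟩ := step_lemma hE H1 hx hxU hU hex hφ
    have hcard' : (insert y' U).ncard = U.ncard + 1 := Set.ncard_insert_of_notMem hy'U hUfin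
    have hxins : x ∉ insert y' U := by
      intro hmem
      rcases Set.mem_insert_iff.mp hmem with h | h
      · exact hy'x h.symm
      · exact hxU h
    obtain ⟨W, hW1, hW2, hW3, hW4, hW5⟩ :=
      ih (insert y' U) (Set.insert_subset hy'E hU) hxins ⟨ψ, hψ⟩ (by omega)
    exact ⟨W, (Set.subset_insert _ _).trans hW1, hW2, hW3, by omega, hW5⟩

lemma beta_eq_of_sep {E W : Set (Euc N)} (hE : E.Finite) {d' : Euc N} {k : ℕ}
    (hW : W ⊆ E) (hWcard : W.ncard = k - 1) (hk1 : 1 ≤ k) (hsep : Sep E W d') :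
    beta E k d' = E \ W := by
  have hWfin : W.Finite := hE.subset hW
  ext z
  constructor
  · rintro ⟨hzE, hzrk⟩
    refine ⟨hzE, fun hzW => ?_⟩
    have hsub : LS E d' z ⊆ W := by
      intro y hy
      by_contra hyW
      exact absurd hy.2 (not_le.mpr (hsep z hzW y hy.1 hyW))
    have := Set.ncard_le_ncard hsub hWfin
    omega
  · rintro ⟨hzE, hzW⟩
    refine ⟨hzE, ?_⟩
    have hsub : insert z W ⊆ LS E d' z := by
      intro y hy
      rcases Set.mem_insert_iff.mp hy with rfl | hyW
      · exact ⟨hzE, le_refl _⟩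
      · exact ⟨hW hyW, (hsep y hyW z hzE hzW).le⟩
    have h1 : (insert z W).ncard = k := by
      rw [Set.ncard_insert_of_notMem hzW hWfin]; omega
    have h2 := Set.ncard_le_ncard hsub (hE.subset LS_subset)
    omega

lemma core_mem {E : Set (Euc N)} (hE : E.Finite)
    (H1 : ∀ x ∈ E, x ∉ convexHull ℝ (E \ {x}))
    {k : ℕ} (hk1 : 1 ≤ k) (hkn : k ≤ E.ncard)
    {d : Euc N} (hd : d ∈ sph N) {x : Euc N}
    (hx : x ∈ beta E (E.ncard - k + 1) d) :
    ∃ d' ∈ sph N, x ∈ beta E k d' ∧ ∀ y ∈ beta E k d', ⟪y, d⟫ ≤ ⟪x, d⟫ := by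
  obtain ⟨hxE, hxrk⟩ := hx
  set U : Set (Euc N) := E \ LS E d x with hUdef
  have hxLS : x ∈ LS E d x := ⟨hxE, le_refl _⟩
  have hU : U ⊆ E := Set.diff_subset
  have hxU : x ∉ U := fun h => h.2 hxLS
  have hLSn : (LS E d x).ncard ≤ E.ncard := Set.ncard_le_ncard LS_subset hE
  have hUn : U.ncard = E.ncard - (LS E d x).ncard := by
    rw [hUdef, Set.ncard_diff LS_subset (hE.subset LS_subset)]
  have hUk : U.ncard ≤ k - 1 := by omega
  have hsepU : Sep E U (-d) := by
    intro u hu z hz hzU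
    have hzLS : z ∈ LS E d x := by
      by_contra hc
      exact hzU ⟨hz, hc⟩
    have huLS : ¬ ⟪u, d⟫ ≤ ⟪x, d⟫ := fun hc => hu.2 ⟨hu.1, hc⟩
    have h1 : ⟪z, d⟫ ≤ ⟪x, d⟫ := hzLS.2
    have h2 : ⟪x, d⟫ < ⟪u, d⟫ := not_le.mp huLS
    simp only [inner_neg_right]
    linarith
  obtain ⟨W, hWU, hWE, hWx, hWcard, ψ, hψ⟩ :=
    grow hE H1 hxE (k - 1 - U.ncard) U hU hxU ⟨-d, hsepU⟩ (by omega)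
  have hWcard' : W.ncard = k - 1 := by omega
  -- produce a unit direction
  have hmain : ∃ d' ∈ sph N, Sep E W d' := by
    rcases Set.eq_empty_or_nonempty W with hemp | ⟨w₀, hw₀⟩
    · exact ⟨d, hd, by rw [hemp]; intro u hu; exact absurd hu (Set.notMem_empty u)⟩
    · have hψne : ψ ≠ 0 := by
        intro h0
        have := hψ w₀ hw₀ x hxE hWx
        rw [h0, inner_zero_right, inner_zero_right] at this
        exact lt_irrefl 0 this
      have hnorm : (0:ℝ) < ‖ψ‖ := norm_pos_iff.mpr hψne
      refine ⟨‖ψ‖⁻¹ • ψ, ?_, ?_⟩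
      · simp only [sph, Metric.mem_sphere, dist_zero_right, norm_smul, norm_inv, norm_norm]
        field_simp
      · intro u hu z hz hzW
        have := hψ u hu z hz hzW
        rw [real_inner_smul_right, real_inner_smul_right]
        exact mul_lt_mul_of_pos_left this (inv_pos.mpr hnorm)
  obtain ⟨d', hd', hsep'⟩ := hmain
  have hbeta : beta E k d' = E \ W := beta_eq_of_sep hE hWE hWcard' hk1 hsep'
  refine ⟨d', hd', ?_, ?_⟩
  · rw [hbeta]; exact ⟨hxE, hWx⟩
  · intro y hy
    rw [hbeta] at hy
    have hyLS : y ∈ LS E d x := by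
      by_contra hc
      exact hy.2 (hWU ⟨hy.1, hc⟩)
    exact hyLS.2

lemma core_mem_rev {E : Set (Euc N)} (hE : E.Finite)
    {k : ℕ} (hk1 : 1 ≤ k) (hkn : k ≤ E.ncard) {d d' x : Euc N}
    (hx : x ∈ beta E k d') (hmax : ∀ y ∈ beta E k d', ⟪y, d⟫ ≤ ⟪x, d⟫) :
    x ∈ beta E (E.ncard - k + 1) d := by
  have hxE : x ∈ E := hx.1
  refine ⟨hxE, ?_⟩
  have hsub : beta E k d' ⊆ LS E d x := fun y hy => ⟨hy.1, hmax y hy⟩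
  have h1 := Set.ncard_le_ncard hsub (hE.subset LS_subset)
  have h2 := beta_large hE k d'
  omega

end St14

namespace St14
variable {N : ℕ}

lemma family_step {E : Set (Euc N)} (hE : E.Finite)
    (H1 : ∀ x ∈ E, x ∉ convexHull ℝ (E \ {x}))
    {k : ℕ} (hk1 : 1 ≤ k) (hkn : k ≤ E.ncard)
    {d : Euc N} (hd : d ∈ sph N) :
    (⋃ Ω ∈ (fun d' => convexHull ℝ (beta E k d')) '' sph N, activeExt Ω d)
      = beta E (E.ncard - k + 1) d := by
  rw [Set.biUnion_image]
  have hIndE : ∀ A ⊆ E, ∀ z ∈ A, z ∉ convexHull ℝ (A \ {z}) := fun A hA z hz hmem =>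
    H1 z (hA hz) (convexHull_mono (Set.diff_subset_diff_left hA) hmem)
  have hcongr : ∀ d' : Euc N, activeExt (convexHull ℝ (beta E k d')) d
      = {x ∈ beta E k d' | ∀ y ∈ beta E k d', ⟪y, d⟫ ≤ ⟪x, d⟫} := fun d' =>
    activeExt_convexHull (hE.subset beta_subset)
      (fun z hz => hIndE _ beta_subset z hz) d
  ext x
  simp only [Set.mem_iUnion, exists_prop]
  constructor
  · rintro ⟨d', hd', hx⟩
    rw [hcongr d'] at hx
    exact core_mem_rev hE hk1 hkn hx.1 hx.2
  · intro hx
    obtain ⟨d', hd', h1, h2⟩ := core_mem hE H1 hk1 hkn hd hx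
    refine ⟨d', hd', ?_⟩
    rw [hcongr d']
    exact ⟨h1, h2⟩

end St14

open St14

/-- under (H1) and (H2), the dual polytopes of `ℜ₀` and of `ℜ₂` coincide
in every direction; hence `F(ℜ₀) = F(ℜ₂)`. -/
theorem dual_polys_eq_after_two {N : ℕ} (ℛ₀ : Set (Set (Euc N))) (hfin : ℛ₀.Finite)
    (hpoly : ∀ Ω ∈ ℛ₀, IsPolytope Ω)
    (E : Set (Euc N)) (hE : E = extFam ℛ₀)
    (rmin : ℕ) (hrmin : IsLeast {r : ℕ | ∃ Ω ∈ ℛ₀, r = (Ω ∩ E).ncard} rmin)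
    (H1 : ∀ x ∈ E, x ∉ convexHull ℝ (E \ {x}))
    (H2 : ∀ A ⊆ E, A.ncard = rmin → convexHull ℝ A ∈ ℛ₀) :
    (∀ d ∈ sph N, dualPoly ℛ₀ d = dualPoly (dualFam (dualFam ℛ₀)) d) ∧
      dualFam ℛ₀ = dualFam (dualFam (dualFam ℛ₀)) := by
  classical
  have hEfin : E.Finite := by
    rw [hE]; exact hfin.biUnion (fun Ω hΩ => (hpoly Ω hΩ).2.2.2)
  have hextsub : ∀ Ω ∈ ℛ₀, Set.extremePoints ℝ Ω ⊆ E := by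
    intro Ω hΩ
    rw [hE]
    exact Set.subset_biUnion_of_mem (u := fun Ω => Set.extremePoints ℝ Ω) hΩ
  have hIndE : ∀ A ⊆ E, ∀ z ∈ A, z ∉ convexHull ℝ (A \ {z}) := fun A hA z hz hmem =>
    H1 z (hA hz) (convexHull_mono (Set.diff_subset_diff_left hA) hmem)
  have hΩconv : ∀ Ω ∈ ℛ₀, Ω = convexHull ℝ (Set.extremePoints ℝ Ω) := by
    intro Ω hΩ
    obtain ⟨hne, hconv, hcomp, hextfin⟩ := hpoly Ω hΩ
    have h1 : closure (convexHull ℝ (Set.extremePoints ℝ Ω)) = Ω :=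
      closure_convexHull_extremePoints hcomp hconv
    have h2 : IsClosed (convexHull ℝ (Set.extremePoints ℝ Ω)) :=
      (hextfin.isCompact_convexHull ℝ).isClosed
    conv_lhs => rw [← h1]
    rw [h2.closure_eq]
  -- rank facts
  obtain ⟨Ω₀, hΩ₀, hr0⟩ := hrmin.1
  have hΩ₀ne : (Ω₀ ∩ E).Nonempty := by
    obtain ⟨z, hz⟩ := (hpoly Ω₀ hΩ₀).2.2.1.extremePoints_nonempty (hpoly Ω₀ hΩ₀).1
    exact ⟨z, extremePoints_subset hz, hextsub Ω₀ hΩ₀ hz⟩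
  have hΩ₀fin : (Ω₀ ∩ E).Finite := hEfin.subset Set.inter_subset_right
  have hk1 : 1 ≤ rmin := by
    rw [hr0]
    exact (Set.ncard_pos hΩ₀fin).mpr hΩ₀ne
  have hkn : rmin ≤ E.ncard := by
    rw [hr0]; exact Set.ncard_le_ncard Set.inter_subset_right hEfin
  set n := E.ncard with hn
  -- the first dual polytope
  have hB : ∀ d : Euc N, (⋃ Ω ∈ ℛ₀, activeExt Ω d) = beta E rmin d := by
    intro d
    ext x
    simp only [Set.mem_iUnion, exists_prop]
    constructor
    · rintro ⟨Ω, hΩ, hxext, hxmax⟩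
      have hxE : x ∈ E := hextsub Ω hΩ hxext
      refine ⟨hxE, ?_⟩
      have hsub : Ω ∩ E ⊆ LS E d x := fun y hy => ⟨hy.2, hxmax y hy.1⟩
      have h1 := Set.ncard_le_ncard hsub (hEfin.subset LS_subset)
      have h2 : rmin ≤ (Ω ∩ E).ncard := hrmin.2 ⟨Ω, hΩ, rfl⟩
      omega
    · rintro ⟨hxE, hxrk⟩
      have hxLS : x ∈ LS E d x := ⟨hxE, le_refl _⟩
      obtain ⟨A, hxA, hALS, hAcard⟩ := Set.exists_subsuperset_card_eq
        (Set.singleton_subset_iff.mpr hxLS) (by simpa using hk1) hxrk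
      have hAE : A ⊆ E := hALS.trans LS_subset
      have hAfin := hEfin.subset hAE
      refine ⟨convexHull ℝ A, H2 A hAE hAcard, ?_⟩
      rw [activeExt_convexHull hAfin (fun z hz => hIndE A hAE z hz) d]
      exact ⟨hxA rfl, fun y hy => (hALS hy).2⟩
  have hDP0 : ∀ d : Euc N, dualPoly ℛ₀ d = convexHull ℝ (beta E rmin d) := by
    intro d; rw [dualPoly, hB]
  have hfam0 : dualFam ℛ₀ = (fun d' => convexHull ℝ (beta E rmin d')) '' sph N :=
    Set.image_congr (fun d' _ => hDP0 d')
  have hk'1 : 1 ≤ n - rmin + 1 := by omega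
  have hk'n : n - rmin + 1 ≤ n := by omega
  have hDP1 : ∀ d ∈ sph N, dualPoly (dualFam ℛ₀) d
      = convexHull ℝ (beta E (n - rmin + 1) d) := by
    intro d hd
    rw [dualPoly, hfam0, family_step hEfin H1 hk1 hkn hd]
  have hfam1 : dualFam (dualFam ℛ₀)
      = (fun d' => convexHull ℝ (beta E (n - rmin + 1) d')) '' sph N :=
    Set.image_congr (fun d' hd' => hDP1 d' hd')
  have hDP2 : ∀ d ∈ sph N, dualPoly (dualFam (dualFam ℛ₀)) d
      = convexHull ℝ (beta E rmin d) := by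
    intro d hd
    rw [dualPoly, hfam1, family_step hEfin H1 hk'1 hk'n hd]
    have harith : n - (n - rmin + 1) + 1 = rmin := by omega
    rw [harith]
  have part1 : ∀ d ∈ sph N, dualPoly ℛ₀ d = dualPoly (dualFam (dualFam ℛ₀)) d := by
    intro d hd
    rw [hDP0 d, hDP2 d hd]
  refine ⟨part1, ?_⟩
  exact Set.image_congr (fun d hd => part1 d hd)
end
end

section
/- Let ℜ₀ be a finite family of polytopes in ℝ^N satisfying (H1) and containing all singletons {x} for x ∈ E (the case r_min = 1). Then Ω_{ℜ₀}(d) = C for every d ∈ S, so that ℜ₁ = F(ℜ₀) = {C}; moreover ℜ₂ = F({C}) is the family of all faces of C, ℜ₂ contains all singletons {x}, x ∈ E, and consequently ℜ₃ = {C} = ℜ₁. -/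
open scoped RealInnerProductSpace
open Set

noncomputable section

/-- The face `F(Ω,d)` of `Ω` in direction `d` (the set of minimizers of `⟨·,d⟩` on `Ω`). -/
def face {N : ℕ} (Ω : Set (Euc N)) (d : Euc N) : Set (Euc N) :=
  {x ∈ Ω | ∀ z ∈ Ω, ⟪x, d⟫ ≤ ⟪z, d⟫}

lemma sph_nonempty {N : ℕ} (hN : 0 < N) : (sph N).Nonempty := by
  refine ⟨EuclideanSpace.single ⟨0, hN⟩ (1 : ℝ), ?_⟩
  simp [sph, EuclideanSpace.norm_single]

lemma neg_mem_sph {N : ℕ} {d : Euc N} (hd : d ∈ sph N) : -d ∈ sph N := by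
  simp only [sph, mem_sphere_zero_iff_norm, norm_neg] at hd ⊢
  exact hd

lemma activeExt_singleton {N : ℕ} (x d : Euc N) :
    activeExt ({x} : Set (Euc N)) d = {x} := by
  ext y
  simp only [activeExt, extremePoints_singleton, mem_setOf_eq, mem_singleton_iff]
  constructor
  · rintro ⟨rfl, -⟩; rfl
  · rintro rfl
    exact ⟨rfl, by rintro z rfl; exact le_refl _⟩

lemma union_activeExt {N : ℕ} (ℛ : Set (Set (Euc N))) (E : Set (Euc N))
    (hub : ∀ Ω ∈ ℛ, Set.extremePoints ℝ Ω ⊆ E)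
    (hsing : ∀ x ∈ E, ({x} : Set (Euc N)) ∈ ℛ) (d : Euc N) :
    ⋃ Ω ∈ ℛ, activeExt Ω d = E := by
  apply Subset.antisymm
  · exact iUnion₂_subset fun Ω hΩ y hy => hub Ω hΩ hy.1
  · intro x hx
    exact mem_iUnion₂.2 ⟨{x}, hsing x hx, by rw [activeExt_singleton]; rfl⟩

lemma dualPoly_singleton {N : ℕ} (C : Set (Euc N)) (d : Euc N) :
    dualPoly {C} d = convexHull ℝ (activeExt C d) := by
  simp [dualPoly]

lemma convexHull_activeExt_eq_face {N : ℕ} {E : Set (Euc N)} (hEfin : E.Finite)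
    {C : Set (Euc N)} (hC : C = convexHull ℝ E) (d : Euc N) :
    convexHull ℝ (activeExt C d) = face C (-d) := by
  have hCc : IsCompact C := hC ▸ hEfin.isCompact_convexHull ℝ
  have hCv : Convex ℝ C := hC ▸ convex_convexHull ℝ E
  have hextC : Set.extremePoints ℝ C ⊆ E := hC ▸ extremePoints_convexHull_subset
  set l : Euc N →L[ℝ] ℝ := innerSL ℝ d with hl
  have hface : face C (-d) = l.toExposed C := by
    ext y
    simp only [face, ContinuousLinearMap.toExposed, mem_setOf_eq, hl, innerSL_apply_apply,
      inner_neg_right, neg_le_neg_iff]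
    constructor
    · rintro ⟨h1, h2⟩
      refine ⟨h1, fun z hz => ?_⟩
      rw [real_inner_comm z d, real_inner_comm y d]
      exact h2 z hz
    · rintro ⟨h1, h2⟩
      refine ⟨h1, fun z hz => ?_⟩
      rw [real_inner_comm d z, real_inner_comm d y]
      exact h2 z hz
  have hexp : IsExposed ℝ C (l.toExposed C) := ContinuousLinearMap.toExposed.isExposed
  have hextr : IsExtreme ℝ C (l.toExposed C) := hexp.isExtreme
  have hAeq : activeExt C d = l.toExposed C ∩ Set.extremePoints ℝ C := by
    ext y
    simp only [activeExt, ContinuousLinearMap.toExposed, mem_setOf_eq, mem_inter_iff,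
      hl, innerSL_apply_apply]
    constructor
    · rintro ⟨h1, h2⟩
      refine ⟨⟨extremePoints_subset h1, fun z hz => ?_⟩, h1⟩
      rw [real_inner_comm z d, real_inner_comm y d]
      exact h2 z hz
    · rintro ⟨⟨-, h2⟩, h1⟩
      refine ⟨h1, fun z hz => ?_⟩
      rw [real_inner_comm d z, real_inner_comm d y]
      exact h2 z hz
  rcases C.eq_empty_or_nonempty with hCe | hCne
  · have hBe : l.toExposed C = ∅ :=
      eq_empty_of_subset_empty (hCe ▸ hexp.subset)
    rw [hAeq, hface, hBe, empty_inter, convexHull_empty]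
  · have hBcomp : IsCompact (l.toExposed C) := hexp.isCompact hCc
    have hBconv : Convex ℝ (l.toExposed C) := hexp.convex hCv
    have hKM := closure_convexHull_extremePoints hBcomp hBconv
    have hEP : Set.extremePoints ℝ (l.toExposed C) =
        l.toExposed C ∩ Set.extremePoints ℝ C := hextr.extremePoints_eq
    have hfin2 : (Set.extremePoints ℝ (l.toExposed C)).Finite :=
      hEfin.subset (by rw [hEP]; exact fun y hy => hextC hy.2)
    have hclosed : IsClosed (convexHull ℝ (Set.extremePoints ℝ (l.toExposed C))) :=
      (hfin2.isCompact_convexHull ℝ).isClosed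
    rw [hface, ← hKM, hclosed.closure_eq, hEP, ← hAeq]

lemma exists_dir {N : ℕ} (hN : 0 < N) {E : Set (Euc N)} (hEfin : E.Finite)
    {C : Set (Euc N)} (hC : C = convexHull ℝ E) {x : Euc N} (hxE : x ∈ E)
    (hH1 : x ∉ convexHull ℝ (E \ {x})) :
    ∃ d ∈ sph N, activeExt C d = {x} := by
  rcases (E \ {x}).eq_empty_or_nonempty with hdiff | hdiff
  · have hEx : E = {x} := by
      apply Subset.antisymm _ (singleton_subset_iff.2 hxE)
      intro y hy
      by_contra h
      exact (eq_empty_iff_forall_notMem.1 hdiff y) ⟨hy, h⟩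
    obtain ⟨d, hd⟩ := sph_nonempty hN
    refine ⟨d, hd, ?_⟩
    rw [hC, hEx, convexHull_singleton, activeExt_singleton]
  · have hKconv : Convex ℝ (convexHull ℝ (E \ {x})) := convex_convexHull ℝ _
    have hKclosed : IsClosed (convexHull ℝ (E \ {x})) :=
      ((hEfin.subset diff_subset).isCompact_convexHull ℝ).isClosed
    obtain ⟨f, u, hfu, hux⟩ := geometric_hahn_banach_closed_point hKconv hKclosed hH1
    have hlin : IsLinearMap ℝ f := ⟨f.map_add, f.map_smul⟩
    have hfE : ∀ y ∈ E, f y ≤ f x := by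
      intro y hy
      rcases eq_or_ne y x with rfl | hne
      · exact le_refl _
      · exact ((hfu y (subset_convexHull ℝ _ ⟨hy, hne⟩)).trans hux).le
    have hfC : ∀ y ∈ C, f y ≤ f x := by
      rw [hC]
      exact fun y hy => convexHull_min hfE (convex_halfSpace_le hlin (f x)) hy
    have hfK : ∀ z ∈ convexHull ℝ (E \ {x}), f z ≤ u := fun z hz =>
      convexHull_min (fun w hw => (hfu w (subset_convexHull ℝ _ hw)).le)
        (convex_halfSpace_le hlin u) hz
    have huniq : ∀ y ∈ C, f x ≤ f y → y = x := by
      intro y hyC hge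
      rw [hC] at hyC
      have hE' : E = insert x (E \ {x}) := by
        rw [insert_diff_singleton, insert_eq_self.2 hxE]
      rw [hE', convexHull_insert hdiff, mem_convexJoin] at hyC
      obtain ⟨a, ha, z, hz, hseg⟩ := hyC
      rw [mem_singleton_iff.1 ha] at hseg
      obtain ⟨s, t, hs, ht, hst, heq⟩ := hseg
      have hfz : f z ≤ u := hfK z hz
      have hval : f y = s * f x + t * f z := by
        rw [← heq]; simp [map_add, map_smul, smul_eq_mul]
      rcases eq_or_lt_of_le ht with h0 | hpos
      · have hs1 : s = 1 := by linarith
        rw [← heq, hs1, ← h0]; simp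
      · exfalso
        rw [hval] at hge
        have hsum : s * f x + t * f x = f x := by rw [← add_mul, hst, one_mul]
        have h3 : t * f z ≤ t * u := mul_le_mul_of_nonneg_left hfz hpos.le
        have h4 : t * u < t * f x := mul_lt_mul_of_pos_left hux hpos
        linarith
    have hxC : x ∈ C := hC ▸ subset_convexHull ℝ E hxE
    have hxext : x ∈ Set.extremePoints ℝ C := by
      refine ⟨hxC, ?_⟩
      intro x₁ hx₁ x₂ hx₂ hseg
      obtain ⟨s, t, hs, ht, hst, hxy⟩ := hseg
      have h1 : f x₁ ≤ f x := hfC x₁ hx₁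
      have h2 : f x₂ ≤ f x := hfC x₂ hx₂
      have hval : f x = s * f x₁ + t * f x₂ := by
        rw [← hxy]; simp [map_add, map_smul, smul_eq_mul]
      have hsum : s * f x + t * f x = f x := by rw [← add_mul, hst, one_mul]
      have ha1 : t * f x₂ ≤ t * f x := mul_le_mul_of_nonneg_left h2 ht.le
      have ha2 : s * f x₁ ≤ s * f x := mul_le_mul_of_nonneg_left h1 hs.le
      have he1 : f x ≤ f x₁ := by nlinarith [hsum, hval, ha1, hs, ht]
      have he2 : f x ≤ f x₂ := by nlinarith [hsum, hval, ha2, hs, ht]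
      exact huniq x₁ hx₁ he1
    set v := (InnerProductSpace.toDual ℝ (Euc N)).symm f with hv
    have hvapp : ∀ y, ⟪v, y⟫ = f y := fun y => InnerProductSpace.toDual_symm_apply
    have hvne : v ≠ 0 := by
      intro h0
      obtain ⟨a, ha⟩ := hdiff
      have h1 : f a < u := hfu a (subset_convexHull ℝ _ ha)
      have hfa : f a = 0 := by rw [← hvapp a, h0, inner_zero_left]
      have hfx : f x = 0 := by rw [← hvapp x, h0, inner_zero_left]
      linarith
    have hpos : (0 : ℝ) < ‖v‖⁻¹ := inv_pos.2 (norm_pos_iff.2 hvne)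
    refine ⟨‖v‖⁻¹ • v, ?_, ?_⟩
    · simp only [sph, mem_sphere_zero_iff_norm]
      exact norm_smul_inv_norm hvne
    · have hdip : ∀ y : Euc N, ⟪y, ‖v‖⁻¹ • v⟫ = ‖v‖⁻¹ * f y := by
        intro y
        rw [real_inner_comm, real_inner_smul_left, hvapp]
      ext y
      simp only [activeExt, mem_setOf_eq, mem_singleton_iff]
      constructor
      · rintro ⟨hyext, hmax⟩
        have hyC : y ∈ C := extremePoints_subset hyext
        have hle : ‖v‖⁻¹ * f x ≤ ‖v‖⁻¹ * f y := by
          have := hmax x hxC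
          rwa [hdip x, hdip y] at this
        exact huniq y hyC (le_of_mul_le_mul_left hle hpos)
      · intro hyx
        rw [hyx]
        refine ⟨hxext, fun z hz => ?_⟩
        rw [hdip z, hdip x]
        exact mul_le_mul_of_nonneg_left (hfC z hz) hpos.le

/-- the case `r_min = 1`: if `ℜ₀` contains all singletons `{x}`, `x ∈ E`,
then `ℜ₁ = {C}`, `ℜ₂` is the family of all faces of `C`, contains all singletons,
and `ℜ₃ = {C} = ℜ₁`. -/
theorem rmin_one_case {N : ℕ} (hN : 0 < N) (ℛ₀ : Set (Set (Euc N))) (hfin : ℛ₀.Finite)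
    (hpoly : ∀ Ω ∈ ℛ₀, IsPolytope Ω)
    (E : Set (Euc N)) (hE : E = extFam ℛ₀)
    (C : Set (Euc N)) (hC : C = convexHull ℝ E)
    (H1 : ∀ x ∈ E, x ∉ convexHull ℝ (E \ {x}))
    (hsing : ∀ x ∈ E, ({x} : Set (Euc N)) ∈ ℛ₀) :
    (∀ d ∈ sph N, dualPoly ℛ₀ d = C) ∧
      dualFam ℛ₀ = {C} ∧
      dualFam {C} = {F : Set (Euc N) | ∃ d ∈ sph N, F = face C d} ∧
      (∀ x ∈ E, ({x} : Set (Euc N)) ∈ dualFam ({C} : Set (Set (Euc N)))) ∧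
      dualFam^[3] ℛ₀ = dualFam ℛ₀ := by
  have hEfin : E.Finite := by
    rw [hE]; exact hfin.biUnion fun Ω hΩ => (hpoly Ω hΩ).2.2.2
  have hub : ∀ Ω ∈ ℛ₀, Set.extremePoints ℝ Ω ⊆ E := by
    intro Ω hΩ
    rw [hE, extFam]
    exact subset_biUnion_of_mem hΩ
  have part1 : ∀ d, dualPoly ℛ₀ d = C := by
    intro d
    rw [dualPoly, union_activeExt ℛ₀ E hub hsing d, ← hC]
  obtain ⟨d₀, hd₀⟩ := sph_nonempty hN
  have part2 : dualFam ℛ₀ = {C} := by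
    apply Subset.antisymm
    · rintro S ⟨d, hd, rfl⟩
      exact mem_singleton_iff.2 (part1 d)
    · rintro S hS
      rw [mem_singleton_iff] at hS; subst hS
      exact ⟨d₀, hd₀, part1 d₀⟩
  have hhull : ∀ d, convexHull ℝ (activeExt C d) = face C (-d) := fun d =>
    convexHull_activeExt_eq_face hEfin hC d
  have part3 : dualFam {C} = {F : Set (Euc N) | ∃ d ∈ sph N, F = face C d} := by
    ext F
    constructor
    · rintro ⟨d, hd, rfl⟩
      exact ⟨-d, neg_mem_sph hd, by rw [dualPoly_singleton, hhull]⟩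
    · rintro ⟨d, hd, rfl⟩
      refine ⟨-d, neg_mem_sph hd, ?_⟩
      rw [dualPoly_singleton, hhull, neg_neg]
  have part4 : ∀ x ∈ E, ({x} : Set (Euc N)) ∈ dualFam ({C} : Set (Set (Euc N))) := by
    intro x hx
    obtain ⟨d, hd, hact⟩ := exists_dir hN hEfin hC hx (H1 x hx)
    exact ⟨d, hd, by rw [dualPoly_singleton, hact, convexHull_singleton]⟩
  refine ⟨fun d _ => part1 d, part2, part3, part4, ?_⟩
  have hub2 : ∀ Ω ∈ dualFam ({C} : Set (Set (Euc N))), Set.extremePoints ℝ Ω ⊆ E := by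
    rintro Ω ⟨d, hd, rfl⟩
    rw [dualPoly_singleton]
    intro y hy
    have h1 : y ∈ activeExt C d := extremePoints_convexHull_subset hy
    exact (hC ▸ extremePoints_convexHull_subset) h1.1
  have part1' : ∀ d, dualPoly (dualFam ({C} : Set (Set (Euc N)))) d = C := by
    intro d
    rw [dualPoly, union_activeExt _ E hub2 part4 d, ← hC]
  have key : dualFam (dualFam ({C} : Set (Set (Euc N)))) = {C} := by
    apply Subset.antisymm
    · rintro S ⟨d, hd, rfl⟩
      exact mem_singleton_iff.2 (part1' d)
    · rintro S hS
      rw [mem_singleton_iff] at hS; subst hS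
      exact ⟨d₀, hd₀, part1' d₀⟩
  show dualFam (dualFam (dualFam ℛ₀)) = dualFam ℛ₀
  rw [part2, key]
end
end
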